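/- Positivity of the partial transpose is necessary for separability: if ρ = Σ_{p=1}^{s} w^p · (ρ_{A,p} ⊗ ρ_{B,p}) with w^p ≥ 0 and each ρ_{A,p}, ρ_{B,p} a 2×2 positive semidefinite Hermitian matrix, then both partial transposes ρ^{T₁} and ρ^{T₂} are positive semidefinite. -/

import Mathlib

open Matrix Kronecker ComplexOrder

/-- Partial transpose on the first qubit: `(ρ^{T₁})_{(a,c),(b,d)} = ρ_{(b,c),(a,d)}`. -/
def PT1 (ρ : Matrix (Fin 2 × Fin 2) (Fin 2 × Fin 2) ℂ) :
    Matrix (Fin 2 × Fin 2) (Fin 2 × Fin 2) ℂ :=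
  Matrix.of fun p q => ρ (q.1, p.2) (p.1, q.2)

/-- Partial transpose on the second qubit: `(ρ^{T₂})_{(a,c),(b,d)} = ρ_{(a,d),(b,c)}`. -/
def PT2 (ρ : Matrix (Fin 2 × Fin 2) (Fin 2 × Fin 2) ℂ) :
    Matrix (Fin 2 × Fin 2) (Fin 2 × Fin 2) ℂ :=
  Matrix.of fun p q => ρ (p.1, q.2) (q.1, p.2)

lemma kronecker_conjTranspose {n m : Type*} (A : Matrix n n ℂ) (B : Matrix m m ℂ) :
    (A ⊗ₖ B)ᴴ = Aᴴ ⊗ₖ Bᴴ := by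
  ext ⟨a, c⟩ ⟨b, d⟩
  simp [conjTranspose_apply, kroneckerMap_apply, mul_comm]

lemma kronecker_posSemidef {A B : Matrix (Fin 2) (Fin 2) ℂ}
    (hA : A.PosSemidef) (hB : B.PosSemidef) : (A ⊗ₖ B).PosSemidef := by
  obtain ⟨P, hP⟩ : ∃ P : Matrix (Fin 2) (Fin 2) ℂ, A = Pᴴ * P := by
    open MatrixOrder in exact CStarAlgebra.nonneg_iff_eq_star_mul_self.mp (nonneg_iff_posSemidef.mpr hA)
  obtain ⟨Q, hQ⟩ : ∃ Q : Matrix (Fin 2) (Fin 2) ℂ, B = Qᴴ * Q := by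
    open MatrixOrder in exact CStarAlgebra.nonneg_iff_eq_star_mul_self.mp (nonneg_iff_posSemidef.mpr hB)
  rw [hP, hQ, Matrix.mul_kronecker_mul, ← kronecker_conjTranspose]
  exact Matrix.posSemidef_conjTranspose_mul_self _

lemma smul_posSemidef {n : Type*} [Fintype n] {A : Matrix n n ℂ} (hA : A.PosSemidef)
    {c : ℝ} (hc : 0 ≤ c) : ((c : ℂ) • A).PosSemidef := by
  refine .of_dotProduct_mulVec_nonneg ?_ ?_
  · have := hA.1
    unfold Matrix.IsHermitian at *
    rw [conjTranspose_smul, this]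
    simp
  · intro x
    have h := hA.dotProduct_mulVec_nonneg x
    have : star x ⬝ᵥ ((c : ℂ) • A) *ᵥ x = (c : ℂ) * (star x ⬝ᵥ A *ᵥ x) := by
      simp [Matrix.smul_mulVec, dotProduct_smul]
    rw [this]
    exact mul_nonneg (by exact_mod_cast hc) h

lemma sum_posSemidef {n : Type*} [Fintype n] {s : ℕ} {f : Fin s → Matrix n n ℂ}
    (h : ∀ p, (f p).PosSemidef) : (∑ p, f p).PosSemidef := by
  classical
  refine Finset.sum_induction f _ (fun a b ha hb => ha.add hb) Matrix.PosSemidef.zero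
    (fun p _ => h p)

theorem stmt_11 (s : ℕ) (w : Fin s → ℝ) (ρA ρB : Fin s → Matrix (Fin 2) (Fin 2) ℂ)
    (hw : ∀ p, 0 ≤ w p)
    (hA : ∀ p, (ρA p).IsHermitian ∧ (ρA p).PosSemidef)
    (hB : ∀ p, (ρB p).IsHermitian ∧ (ρB p).PosSemidef)
    (ρ : Matrix (Fin 2 × Fin 2) (Fin 2 × Fin 2) ℂ)
    (hρ : ρ = ∑ p : Fin s, (w p : ℂ) • (ρA p ⊗ₖ ρB p)) :
    (PT1 ρ).PosSemidef ∧ (PT2 ρ).PosSemidef := by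
  have h1 : PT1 ρ = ∑ p : Fin s, (w p : ℂ) • ((ρA p)ᵀ ⊗ₖ ρB p) := by
    subst hρ
    ext ⟨a, c⟩ ⟨b, d⟩
    simp [PT1, Matrix.sum_apply, kroneckerMap_apply, transpose_apply]
  have h2 : PT2 ρ = ∑ p : Fin s, (w p : ℂ) • (ρA p ⊗ₖ (ρB p)ᵀ) := by
    subst hρ
    ext ⟨a, c⟩ ⟨b, d⟩
    simp [PT2, Matrix.sum_apply, kroneckerMap_apply, transpose_apply]
  constructor
  · rw [h1]
    exact sum_posSemidef fun p =>
      smul_posSemidef (kronecker_posSemidef (hA p).2.transpose (hB p).2) (hw p)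
  · rw [h2]
    exact sum_posSemidef fun p =>
      smul_posSemidef (kronecker_posSemidef (hA p).2 (hB p).2.transpose) (hw p)
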